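/- A ring R is strongly 2-nil-clean if and only if every square element of R is the sum of three idempotents and a nilpotent that pairwise commute. -/

import Mathlib

set_option maxHeartbeats 1600000
set_option synthInstance.maxHeartbeats 800000

open Polynomial

/-- In a commutative ring, the product `s(s-1)(s-2)(s-3)` vanishes when `s` is a sum of
three idempotents. -/
private lemma idem_sum_prod {T : Type*} [CommRing T] {e f g : T}
    (he : e * e = e) (hf : f * f = f) (hg : g * g = g) :
    (e + f + g) * ((e + f + g) - 1) * ((e + f + g) - 2) * ((e + f + g) - 3) = 0 := by
  linear_combination
    (6 - 14*g + 6*g^2 - 14*f + 12*f*g + 6*f^2 - 5*e + 4*e*g + 4*e*f + e^2) * he +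
    (6 - 14*g + 6*g^2 - 5*f + 4*f*g + f^2 - 8*e + 12*e*g + 4*e*f) * hf +
    (6 - 5*g + g^2 - 8*f + 4*f*g - 8*e + 4*e*g + 12*e*f) * hg

/-- In a domain where every element satisfies `x²(x²-1)(x²-2)(x²-3) = 0`, every element
satisfies `x³ = x`. -/
private lemma domain_cube {D : Type*} [CommRing D] [IsDomain D]
    (h : ∀ x : D, x ^ 2 * (x ^ 2 - 1) * (x ^ 2 - 2) * (x ^ 2 - 3) = 0) (d : D) :
    d ^ 3 = d := by
  have h24 : ((2 : D) * 2) * (2 * 3) = 0 := by linear_combination h 2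
  have h23 : (2 : D) = 0 ∨ (3 : D) = 0 := by
    rcases mul_eq_zero.mp h24 with h' | h'
    · rcases mul_eq_zero.mp h' with h'' | h''
      · exact Or.inl h''
      · exact Or.inl h''
    · rcases mul_eq_zero.mp h' with h'' | h''
      · exact Or.inl h''
      · exact Or.inr h''
  rcases h23 with h2 | h3
  · have key : (d ^ 2 * (d ^ 2 - 1)) ^ 2 = 0 := by
      linear_combination h d + (d ^ 2 * (d ^ 2 - 1) * (2 * d ^ 2 - 3)) * h2
    have key' : d ^ 2 * (d ^ 2 - 1) = 0 := pow_eq_zero_iff two_ne_zero |>.mp key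
    rcases mul_eq_zero.mp key' with h1 | h1
    · have hd0 : d = 0 := pow_eq_zero_iff two_ne_zero |>.mp h1
      simp [hd0]
    · have hd1 : d ^ 2 = 1 := by linear_combination h1
      calc d ^ 3 = d * d ^ 2 := by ring
        _ = d := by rw [hd1, mul_one]
  · have key : ∀ z : D, z ^ 4 * (z ^ 2 - 1) * (z ^ 2 + 1) = 0 := fun z => by
      linear_combination h z + (2 * z ^ 2 * (z ^ 2 - 1) ^ 2) * h3
    rcases mul_eq_zero.mp (key d) with h1 | h1
    · rcases mul_eq_zero.mp h1 with h1 | h1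
      · have hd0 : d = 0 := pow_eq_zero_iff (by norm_num : (4 : ℕ) ≠ 0) |>.mp h1
        simp [hd0]
      · have hd1 : d ^ 2 = 1 := by linear_combination h1
        calc d ^ 3 = d * d ^ 2 := by ring
          _ = d := by rw [hd1, mul_one]
    · exfalso
      have hz := key (d + 1)
      have hone : (1 : D) = 0 := by
        linear_combination (-1 : D) * hz +
          (d^6 + 8*d^5 + 27*d^4 + 48*d^3 + 42*d^2 + 4*d - 20) * h1 + 7 * h3
      exact one_ne_zero hone

/-- Nilpotency reflects along injective ring homomorphisms. -/
private lemma nilp_reflect {T R : Type*} [CommRing T] [Ring R] (ι : T →+* R)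
    (hinj : Function.Injective ι) {x : T} (h : IsNilpotent (ι x)) : IsNilpotent x := by
  obtain ⟨n, hn⟩ := h
  exact ⟨n, hinj (by rw [map_pow, hn, map_zero])⟩

/-- In a commutative ring, if `S(S-1)(S-2)(S-3) = 0` and `W` is nilpotent, then
`(S+W)((S+W)-1)((S+W)-2)((S+W)-3)` is nilpotent. -/
private lemma comm_prod_nilpotent {T : Type*} [CommRing T] {S W : T}
    (hS : S * (S - 1) * (S - 2) * (S - 3) = 0) (hW : IsNilpotent W) :
    IsNilpotent ((S + W) * ((S + W) - 1) * ((S + W) - 2) * ((S + W) - 3)) := by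
  set π := Ideal.Quotient.mk (nilradical T) with hπ
  have hW0 : π W = 0 := Ideal.Quotient.eq_zero_iff_mem.mpr (mem_nilradical.mpr hW)
  have hprod : π ((S + W) * ((S + W) - 1) * ((S + W) - 2) * ((S + W) - 3)) = 0 := by
    have hπX : π (S + W) = π S := by rw [map_add, hW0, add_zero]
    rw [map_mul, map_mul, map_mul, map_sub, map_sub, map_sub, hπX]
    have h0 : π (S * (S - 1) * (S - 2) * (S - 3)) = 0 := by rw [hS, map_zero]
    rw [map_mul, map_mul, map_mul, map_sub, map_sub, map_sub] at h0
    exact h0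
  exact mem_nilradical.mp (Ideal.Quotient.eq_zero_iff_mem.mp hprod)

/-- The key decomposition in a commutative ring: if `A³ - A` and `6` are nilpotent, then
`A` is the sum of two idempotents and a nilpotent. -/
private lemma decomp_comm {T : Type*} [CommRing T] (A : T)
    (h3 : IsNilpotent (A ^ 3 - A)) (h6 : IsNilpotent (6 : T)) :
    ∃ e f w : T, e * e = e ∧ f * f = f ∧ IsNilpotent w ∧ A = e + f + w := by
  set π := Ideal.Quotient.mk (nilradical T) with hπ
  have hker : ∀ x ∈ RingHom.ker π, IsNilpotent x := by
    intro x hx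
    rw [hπ, Ideal.mk_ker] at hx
    exact mem_nilradical.mp hx
  have hA4 : IsNilpotent (A ^ 2 * A ^ 2 - A ^ 2) := by
    have h : A ^ 2 * A ^ 2 - A ^ 2 = A * (A ^ 3 - A) := by ring
    rw [h]; exact (Commute.all _ _).isNilpotent_mul_left h3
  have hidem1 : IsIdempotentElem (π (A ^ 2)) := by
    show π (A ^ 2) * π (A ^ 2) = π (A ^ 2)
    rw [← map_mul, Ideal.Quotient.eq]
    exact mem_nilradical.mpr hA4
  obtain ⟨e, heid, hee⟩ :=
    exists_isIdempotentElem_eq_of_ker_isNilpotent π hker (π (A ^ 2)) ⟨A ^ 2, rfl⟩ hidem1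
  have hF4 : IsNilpotent ((2 * A ^ 2 - 2 * A) * (2 * A ^ 2 - 2 * A) - (2 * A ^ 2 - 2 * A)) := by
    have h : (2 * A ^ 2 - 2 * A) * (2 * A ^ 2 - 2 * A) - (2 * A ^ 2 - 2 * A)
        = (4 * A - 8) * (A ^ 3 - A) + (A ^ 2 - A) * (6 : T) := by ring
    rw [h]
    exact (Commute.all _ _).isNilpotent_add
      ((Commute.all _ _).isNilpotent_mul_left h3)
      ((Commute.all _ _).isNilpotent_mul_left h6)
  have hidem2 : IsIdempotentElem (π (2 * A ^ 2 - 2 * A)) := by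
    show π (2 * A ^ 2 - 2 * A) * π (2 * A ^ 2 - 2 * A) = π (2 * A ^ 2 - 2 * A)
    rw [← map_mul, Ideal.Quotient.eq]
    exact mem_nilradical.mpr hF4
  obtain ⟨f, hfid, hff⟩ :=
    exists_isIdempotentElem_eq_of_ker_isNilpotent π hker (π (2 * A ^ 2 - 2 * A))
      ⟨2 * A ^ 2 - 2 * A, rfl⟩ hidem2
  have he_nil : IsNilpotent (e - A ^ 2) :=
    mem_nilradical.mp ((Ideal.Quotient.eq (I := nilradical T)).mp hee)
  have hf_nil : IsNilpotent (f - (2 * A ^ 2 - 2 * A)) :=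
    mem_nilradical.mp ((Ideal.Quotient.eq (I := nilradical T)).mp hff)
  have h3A : IsNilpotent (3 * (A ^ 2 - A)) := by
    have hn2 : IsNilpotent ((3 * (A ^ 2 - A)) ^ 2) := by
      have hsq : (3 * (A ^ 2 - A)) ^ 2
          = (9 * A - 18) * (A ^ 3 - A) + 3 * (A ^ 2 - A) * 6 := by ring
      rw [hsq]
      exact (Commute.all _ _).isNilpotent_add
        ((Commute.all _ _).isNilpotent_mul_left h3)
        ((Commute.all _ _).isNilpotent_mul_left h6)
    obtain ⟨m, hm⟩ := hn2
    exact ⟨2 * m, by rw [pow_mul]; exact hm⟩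
  refine ⟨e, f, A - e - f, heid, hfid, ?_, by ring⟩
  have h : A - e - f = -((e - A ^ 2) + (f - (2 * A ^ 2 - 2 * A)) + 3 * (A ^ 2 - A)) := by
    ring
  rw [h]
  exact ((Commute.all _ _).isNilpotent_add
    ((Commute.all _ _).isNilpotent_add he_nil hf_nil) h3A).neg


/-- Commutation passes through `eval₂RingHom'`. -/
private lemma commute_eval₂ {S R : Type*} [CommRing S] [Ring R] (f : S →+* R) (x y : R)
    (hfx : ∀ a, Commute (f a) x) (hfy : ∀ a, Commute (f a) y) (hxy : Commute x y)
    (p : S[X]) : Commute (eval₂RingHom' f x hfx p) y := by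
  induction p using Polynomial.induction_on' with
  | add p q hp hq => rw [map_add]; exact hp.add_left hq
  | monomial n a =>
      have h : eval₂RingHom' f x hfx (monomial n a) = f a * x ^ n := by
        simp [eval₂_monomial]
      rw [h]
      exact (hfy a).mul_left (hxy.pow_left n)

/-- From the hypothesis, every `x` satisfies that `x²(x²-1)(x²-2)(x²-3)` is nilpotent. -/
private lemma sq_spec_nilpotent {R : Type*} [Ring R]
    (H : ∀ x : R, ∃ e f g w : R, IsIdempotentElem e ∧ IsIdempotentElem f ∧
      IsIdempotentElem g ∧ IsNilpotent w ∧
      Commute e f ∧ Commute e g ∧ Commute e w ∧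
      Commute f g ∧ Commute f w ∧ Commute g w ∧ x ^ 2 = e + f + g + w)
    (x : R) : IsNilpotent (x ^ 2 * (x ^ 2 - 1) * (x ^ 2 - 2) * (x ^ 2 - 3)) := by
  obtain ⟨e, f, g, w, he, hf, hg, hw, hef, heg, hew, hfg, hfw, hgw, hx⟩ := H x
  -- Step 1: prove that `s := e + f + g` satisfies `s(s-1)(s-2)(s-3) = 0` exactly,
  -- using the evaluation homomorphism from `ℤ[X][X][X]` sending the variables to
  -- `e`, `f`, `g`.
  have h0e : ∀ n : ℤ, Commute ((Int.castRingHom R) n) e := fun n => Int.cast_commute n e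
  have h0f : ∀ n : ℤ, Commute ((Int.castRingHom R) n) f := fun n => Int.cast_commute n f
  have h0g : ∀ n : ℤ, Commute ((Int.castRingHom R) n) g := fun n => Int.cast_commute n g
  set φ1 : ℤ[X] →+* R := eval₂RingHom' (Int.castRingHom R) e h0e with hφ1
  have h1f : ∀ p, Commute (φ1 p) f := fun p => commute_eval₂ _ _ _ h0e h0f hef p
  have h1g : ∀ p, Commute (φ1 p) g := fun p => commute_eval₂ _ _ _ h0e h0g heg p
  set φ2 : ℤ[X][X] →+* R := eval₂RingHom' φ1 f h1f with hφ2
  have h2g : ∀ p, Commute (φ2 p) g := fun p => commute_eval₂ _ _ _ h1f h1g hfg p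
  set φ3 : ℤ[X][X][X] →+* R := eval₂RingHom' φ2 g h2g with hφ3
  have hψe : φ3 (C (C X)) = e := by
    rw [hφ3, eval₂RingHom'_apply, eval₂_C, hφ2, eval₂RingHom'_apply, eval₂_C, hφ1,
      eval₂RingHom'_apply, eval₂_X]
  have hψf : φ3 (C X) = f := by
    rw [hφ3, eval₂RingHom'_apply, eval₂_C, hφ2, eval₂RingHom'_apply, eval₂_X]
  have hψg : φ3 (X : ℤ[X][X][X]) = g := by
    rw [hφ3, eval₂RingHom'_apply, eval₂_X]
  letI instCR3 : CommRing (ℤ[X][X][X]) := inferInstance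
  set ι3 := @RingHom.kerLift (ℤ[X][X][X]) R instCR3.toRing _ φ3 with hι3
  have hinj3 : Function.Injective ι3 :=
    @RingHom.kerLift_injective (ℤ[X][X][X]) R instCR3.toRing _ φ3
  set E := Ideal.Quotient.mk (RingHom.ker φ3) (C (C X)) with hE'
  set F := Ideal.Quotient.mk (RingHom.ker φ3) (C X) with hF'
  set G := Ideal.Quotient.mk (RingHom.ker φ3) (X : ℤ[X][X][X]) with hG'
  have hiE : ι3 E = e := by rw [hE', hι3, RingHom.kerLift_mk, hψe]
  have hiF : ι3 F = f := by rw [hF', hι3, RingHom.kerLift_mk, hψf]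
  have hiG : ι3 G = g := by rw [hG', hι3, RingHom.kerLift_mk, hψg]
  have hE : E * E = E := hinj3 (by rw [map_mul, hiE]; exact he)
  have hF : F * F = F := hinj3 (by rw [map_mul, hiF]; exact hf)
  have hG : G * G = G := hinj3 (by rw [map_mul, hiG]; exact hg)
  have hEFG := idem_sum_prod hE hF hG
  have hs : (e + f + g) * ((e + f + g) - 1) * ((e + f + g) - 2) * ((e + f + g) - 3) = 0 := by
    have := congrArg ι3 hEFG
    rw [map_zero, map_mul, map_mul, map_mul, map_sub, map_sub, map_sub, map_one,
      map_ofNat, map_ofNat, map_add, map_add, hiE, hiF, hiG] at this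
    exact this
  -- Step 2: pass to the commutative ring generated by `s := e + f + g` and `w`.
  have h0s : ∀ n : ℤ, Commute ((Int.castRingHom R) n) (e + f + g) :=
    fun n => Int.cast_commute n _
  have h0w : ∀ n : ℤ, Commute ((Int.castRingHom R) n) w := fun n => Int.cast_commute n w
  have hsw : Commute (e + f + g) w := (hew.add_left hfw).add_left hgw
  set χ1 : ℤ[X] →+* R := eval₂RingHom' (Int.castRingHom R) (e + f + g) h0s with hχ1
  have hx1w : ∀ p, Commute (χ1 p) w := fun p => commute_eval₂ _ _ _ h0s h0w hsw p
  set χ2 : ℤ[X][X] →+* R := eval₂RingHom' χ1 w hx1w with hχ2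
  have hχS : χ2 (C X) = e + f + g := by
    rw [hχ2, eval₂RingHom'_apply, eval₂_C, hχ1, eval₂RingHom'_apply, eval₂_X]
  have hχW : χ2 (X : ℤ[X][X]) = w := by
    rw [hχ2, eval₂RingHom'_apply, eval₂_X]
  letI instCR2 : CommRing (ℤ[X][X]) := inferInstance
  set ι2 := @RingHom.kerLift (ℤ[X][X]) R instCR2.toRing _ χ2 with hι2
  have hinj2 : Function.Injective ι2 :=
    @RingHom.kerLift_injective (ℤ[X][X]) R instCR2.toRing _ χ2
  set S := Ideal.Quotient.mk (RingHom.ker χ2) (C X) with hS'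
  set W := Ideal.Quotient.mk (RingHom.ker χ2) (X : ℤ[X][X]) with hW'
  have hiS : ι2 S = e + f + g := by rw [hS', hι2, RingHom.kerLift_mk, hχS]
  have hiW : ι2 W = w := by rw [hW', hι2, RingHom.kerLift_mk, hχW]
  have hSprod : S * (S - 1) * (S - 2) * (S - 3) = 0 := by
    apply hinj2
    rw [map_zero, map_mul, map_mul, map_mul, map_sub, map_sub, map_sub, map_one,
      map_ofNat, map_ofNat, hiS]
    exact hs
  have hWnil : IsNilpotent W := nilp_reflect ι2 hinj2 (by rw [hiW]; exact hw)
  have key := comm_prod_nilpotent hSprod hWnil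
  have hmap := key.map ι2
  have hcoe : ι2 ((S + W) * ((S + W) - 1) * ((S + W) - 2) * ((S + W) - 3))
      = x ^ 2 * (x ^ 2 - 1) * (x ^ 2 - 2) * (x ^ 2 - 3) := by
    have hXc : ι2 (S + W) = x ^ 2 := by
      rw [map_add, hiS, hiW, hx]
    rw [map_mul, map_mul, map_mul, map_sub, map_sub, map_sub, map_one,
      map_ofNat, map_ofNat, hXc]
  rwa [hcoe] at hmap

/-- From the hypothesis, `a³ - a` is nilpotent for every `a`. -/
private lemma cube_nilpotent {R : Type*} [Ring R]
    (H : ∀ x : R, ∃ e f g w : R, IsIdempotentElem e ∧ IsIdempotentElem f ∧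
      IsIdempotentElem g ∧ IsNilpotent w ∧
      Commute e f ∧ Commute e g ∧ Commute e w ∧
      Commute f g ∧ Commute f w ∧ Commute g w ∧ x ^ 2 = e + f + g + w)
    (a : R) : IsNilpotent (a ^ 3 - a) := by
  set φ : ℤ[X] →+* R := (Polynomial.aeval a).toRingHom with hφ
  have hφcomm : ∀ p q : ℤ[X], Commute (φ p) (φ q) := fun p q => (Commute.all p q).map φ
  set N : Ideal ℤ[X] :=
    { carrier := {p | IsNilpotent (φ p)}
      zero_mem' := by simp
      add_mem' := fun {p q} hp hq => by
        have : IsNilpotent (φ p + φ q) := (hφcomm p q).isNilpotent_add hp hq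
        simpa [map_add] using this
      smul_mem' := fun c {p} hp => by
        have : IsNilpotent (φ c * φ p) := (hφcomm c p).isNilpotent_mul_left hp
        simpa [smul_eq_mul, map_mul] using this } with hN
  have hNmem : ∀ p : ℤ[X], p ∈ N ↔ IsNilpotent (φ p) := fun p => Iff.rfl
  have hNspec : ∀ p : ℤ[X], p ^ 2 * (p ^ 2 - 1) * (p ^ 2 - 2) * (p ^ 2 - 3) ∈ N := by
    intro p
    rw [hNmem]
    have hnil := sq_spec_nilpotent H (φ p)
    have heq : φ (p ^ 2 * (p ^ 2 - 1) * (p ^ 2 - 2) * (p ^ 2 - 3))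
        = φ p ^ 2 * (φ p ^ 2 - 1) * (φ p ^ 2 - 2) * (φ p ^ 2 - 3) := by
      simp [map_mul, map_sub, map_pow, map_ofNat]
    rw [heq]
    exact hnil
  have hrad : (X ^ 3 - X : ℤ[X]) ∈ N.radical := by
    rw [Ideal.radical_eq_sInf]
    refine Submodule.mem_sInf.mpr ?_
    rintro P ⟨hNP, hP⟩
    haveI := hP
    have hall : ∀ d : ℤ[X] ⧸ P, d ^ 2 * (d ^ 2 - 1) * (d ^ 2 - 2) * (d ^ 2 - 3) = 0 := by
      intro d
      obtain ⟨p, rfl⟩ := Ideal.Quotient.mk_surjective d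
      have hmem : p ^ 2 * (p ^ 2 - 1) * (p ^ 2 - 2) * (p ^ 2 - 3) ∈ P := hNP (hNspec p)
      have h0 := Ideal.Quotient.eq_zero_iff_mem.mpr hmem
      rw [map_mul, map_mul, map_mul, map_sub, map_sub, map_sub, map_pow] at h0
      rw [map_one, map_ofNat, map_ofNat] at h0
      exact h0
    have hcube := domain_cube hall (Ideal.Quotient.mk P X)
    rw [← Ideal.Quotient.eq_zero_iff_mem, map_sub, map_pow, hcube, sub_self]
  obtain ⟨n, hn⟩ := hrad
  rw [hNmem, map_pow] at hn
  obtain ⟨m, hm⟩ := hn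
  have hres : IsNilpotent (φ (X ^ 3 - X)) := ⟨n * m, by rw [pow_mul]; exact hm⟩
  have heq : φ (X ^ 3 - X) = a ^ 3 - a := by
    rw [hφ]
    simp
  rwa [heq] at hres

/-- A ring is strongly 2-nil-clean if every element is the sum of two
idempotents and a nilpotent that pairwise commute. -/
def Strongly2NilClean (R : Type*) [Ring R] : Prop :=
  ∀ a : R, ∃ e f w : R, IsIdempotentElem e ∧ IsIdempotentElem f ∧ IsNilpotent w ∧
    Commute e f ∧ Commute e w ∧ Commute f w ∧ a = e + f + w

theorem stmt_5 (R : Type*) [Ring R] :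
    Strongly2NilClean R ↔
      ∀ x : R, ∃ e f g w : R, IsIdempotentElem e ∧ IsIdempotentElem f ∧
        IsIdempotentElem g ∧ IsNilpotent w ∧
        Commute e f ∧ Commute e g ∧ Commute e w ∧
        Commute f g ∧ Commute f w ∧ Commute g w ∧ x ^ 2 = e + f + g + w := by
  constructor
  · intro H x
    obtain ⟨e, f, w, he, hf, hw, hef, hew, hfw, hx⟩ := H (x ^ 2)
    exact ⟨e, f, 0, w, he, hf, IsIdempotentElem.zero, hw, hef, Commute.zero_right e,
      hew, Commute.zero_right f, hfw, Commute.zero_left w, by rw [hx, add_zero]⟩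
  · intro H a
    have h3 : IsNilpotent (a ^ 3 - a) := cube_nilpotent H a
    have h6 : IsNilpotent (6 : R) := by
      have h2 := cube_nilpotent H (2 : R)
      have he : (2 : R) ^ 3 - 2 = 6 := by norm_num
      rwa [he] at h2
    -- move into the commutative ring `ℤ[X] ⧸ ker (aeval a)`
    set φ : ℤ[X] →+* R := (Polynomial.aeval a).toRingHom with hφ
    set ι := RingHom.kerLift (S := R) φ with hι
    have hinj : Function.Injective ι := RingHom.kerLift_injective φ
    set A := Ideal.Quotient.mk (RingHom.ker φ) X with hA
    have hiA : ι A = a := by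
      rw [hA, hι, RingHom.kerLift_mk, hφ]
      simp
    have hA3 : IsNilpotent (A ^ 3 - A) :=
      nilp_reflect ι hinj (by rw [map_sub, map_pow, hiA]; exact h3)
    have hA6 : IsNilpotent (6 : ℤ[X] ⧸ RingHom.ker φ) :=
      nilp_reflect ι hinj (by rw [map_ofNat]; exact h6)
    obtain ⟨e, f, w, heid, hfid, hwnil, hsum⟩ := decomp_comm A hA3 hA6
    refine ⟨ι e, ι f, ι w, ?_, ?_, hwnil.map ι, ?_, ?_, ?_, ?_⟩
    · show ι e * ι e = ι e
      rw [← map_mul, heid]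
    · show ι f * ι f = ι f
      rw [← map_mul, hfid]
    · show ι e * ι f = ι f * ι e
      rw [← map_mul, ← map_mul, mul_comm]
    · show ι e * ι w = ι w * ι e
      rw [← map_mul, ← map_mul, mul_comm]
    · show ι f * ι w = ι w * ι f
      rw [← map_mul, ← map_mul, mul_comm]
    · rw [← hiA, hsum, map_add, map_add]
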